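/- For non-negative integers n, m, N with 0 < n ≤ m ≤ N, the identity (1/n)·C_N(n,m) = Σ_{b=n}^{m} C_N(n,b)·(1/b) holds, where C_N(n,m) = binom(m,n)/binom(N,n). -/

import Mathlib

lemma key_sum (n : ℕ) (hn : 0 < n) : ∀ m, n ≤ m →
    ∑ b ∈ Finset.Icc n m, (b.choose n : ℚ) * (1 / (b : ℚ)) = (m.choose n : ℚ) / n := by
  intro m
  induction m with
  | zero => intro h; omega
  | succ m ih =>
    intro h
    rcases eq_or_lt_of_le h with h' | h'
    · subst h'
      simp [Nat.choose_self, hn.ne']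
    · have hnm : n ≤ m := by omega
      rw [Finset.sum_Icc_succ_top h, ih hnm]
      have hcast : ((m.choose n : ℚ)) * (m + 1) = ((m + 1).choose n : ℚ) * ((m + 1 : ℕ) - n) := by
        have := Nat.choose_mul_succ_eq m n
        have h2 : (m.choose n * (m + 1) : ℕ) = ((m + 1).choose n * (m + 1 - n) : ℕ) := this
        push_cast [Nat.cast_sub (le_of_lt h')] at h2 ⊢
        exact_mod_cast h2
      have hn' : (n : ℚ) ≠ 0 := by exact_mod_cast hn.ne'
      have hm1 : ((m : ℚ) + 1) ≠ 0 := by positivity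
      push_cast at hcast ⊢
      field_simp
      ring_nf
      ring_nf at hcast
      nlinarith [hcast]

/-- For `0 < n ≤ m ≤ N`: `(1/n)·C_N(n,m) = Σ_{b=n}^{m} C_N(n,b)·(1/b)`,
where `C_N(n,m) = binom(m,n)/binom(N,n)`. -/
theorem stmt_1 (n m N : ℕ) (hn : 0 < n) (hnm : n ≤ m) (hmN : m ≤ N) :
    (1 / (n : ℚ)) * ((m.choose n : ℚ) / (N.choose n : ℚ)) =
    ∑ b ∈ Finset.Icc n m, ((b.choose n : ℚ) / (N.choose n : ℚ)) * (1 / (b : ℚ)) := by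
  have hN : (N.choose n : ℚ) ≠ 0 := by
    exact_mod_cast (Nat.choose_pos (hnm.trans hmN)).ne'
  have := key_sum n hn m hnm
  calc (1 / (n : ℚ)) * ((m.choose n : ℚ) / (N.choose n : ℚ))
      = ((m.choose n : ℚ) / n) / (N.choose n : ℚ) := by ring
    _ = (∑ b ∈ Finset.Icc n m, (b.choose n : ℚ) * (1 / (b : ℚ))) / (N.choose n : ℚ) := by
        rw [this]
    _ = _ := by rw [Finset.sum_div]; exact Finset.sum_congr rfl fun b _ => by ring
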